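/- Free solvable groups are torsion-free: for every d ≥ 1 and r ≥ 1, the group S_{d,r} = F/F^{(d)} (F free of rank r, F^{(d)} the d-th derived subgroup) has no nontrivial elements of finite order. -/

import Mathlib

instance derivedSeries_normal_inst (G : Type) [Group G] (n : ℕ) :
    (derivedSeries G n).Normal := derivedSeries_normal G n

def Monoid.IsTorsionFree (G : Type*) [Monoid G] : Prop :=
  ∀ g : G, g ≠ 1 → ¬IsOfFinOrder g

/-- Torsion-freeness pulls back along injective monoid homs. -/
lemma tf_of_injective {G H : Type*} [Monoid G] [Monoid H] (f : G →* H)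
    (hf : Function.Injective f) (hH : Monoid.IsTorsionFree H) : Monoid.IsTorsionFree G := by
  intro x hx hfin
  exact hH (f x) (fun h => hx (hf (by simpa using h))) (f.isOfFinOrder hfin)

lemma tf_mult_finsupp (α : Type*) : Monoid.IsTorsionFree (Multiplicative (α →₀ ℤ)) := by
  intro x hx hfin
  obtain ⟨n, hn, hxn⟩ := hfin.exists_pow_eq_one
  have hadd : (n : ℤ) • (Multiplicative.toAdd x) = 0 := by
    have : Multiplicative.toAdd (x ^ n) = Multiplicative.toAdd (1 : Multiplicative (α →₀ ℤ)) := by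
      rw [hxn]
    simpa [← natCast_zsmul] using this
  have : Multiplicative.toAdd x = 0 := by
    ext a
    have := congrFun (congrArg (fun f : α →₀ ℤ => (f : α → ℤ)) hadd) a
    simp only [Finsupp.coe_smul, Pi.smul_apply, smul_eq_mul, Finsupp.coe_zero, Pi.zero_apply] at this
    have hn' : (n : ℤ) ≠ 0 := Int.natCast_ne_zero.mpr hn.ne'
    exact (mul_eq_zero.mp this).resolve_left hn'
  exact hx (by simpa using this)

lemma tf_abelianization_freeGroup (α : Type) : Monoid.IsTorsionFree (Abelianization (FreeGroup α)) := by
  -- `FreeAbelianGroup α = Additive (Abelianization (FreeGroup α))` by definition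
  have e : FreeAbelianGroup α ≃+ (α →₀ ℤ) := FreeAbelianGroup.equivFinsupp α
  let f : Abelianization (FreeGroup α) →* Multiplicative (α →₀ ℤ) :=
    AddMonoidHom.toMultiplicativeRight (e.toAddMonoidHom)
  have hf : Function.Injective f := e.injective
  exact tf_of_injective f hf (tf_mult_finsupp α)

lemma tf_abelianization_of_free (G : Type) [Group G] [IsFreeGroup G] :
    Monoid.IsTorsionFree (Abelianization G) := by
  have e : Abelianization G ≃* Abelianization (FreeGroup (IsFreeGroup.Generators G)) :=
    (IsFreeGroup.toFreeGroup (G := G)).abelianizationCongr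
  exact tf_of_injective e.toMonoidHom e.injective (tf_abelianization_freeGroup _)

lemma tf_quotient_derivedSeries (α : Type) (d : ℕ) :
    Monoid.IsTorsionFree (FreeGroup α ⧸ derivedSeries (FreeGroup α) d) := by
  induction d with
  | zero =>
    intro x hx _
    obtain ⟨y, rfl⟩ := QuotientGroup.mk_surjective x
    exact hx ((QuotientGroup.eq_one_iff y).mpr (by rw [derivedSeries_zero]; trivial))
  | succ d ih =>
    set F := FreeGroup α
    set M : Subgroup F := derivedSeries F d with hM
    set N : Subgroup F := derivedSeries F (d + 1) with hN
    haveI : M.Normal := derivedSeries_normal _ _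
    haveI : N.Normal := derivedSeries_normal _ _
    have hNcomm : N = ⁅M, M⁆ := rfl
    have hNM : N ≤ M := by rw [hNcomm]; exact Subgroup.commutator_le_left M M
    -- the projection F⧸N → F⧸M
    let π : (F ⧸ N) →* (F ⧸ M) :=
      QuotientGroup.map N M (MonoidHom.id F) (by simpa using hNM)
    -- hom from Abelianization ↥M into F ⧸ N
    have hcomm : commutator (↥M) ≤ ((QuotientGroup.mk' N).comp M.subtype).ker := by
      intro c hc
      have hmap : (commutator ↥M).map M.subtype = ⁅(⊤ : Subgroup ↥M).map M.subtype, (⊤ : Subgroup ↥M).map M.subtype⁆ :=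
        Subgroup.map_commutator ⊤ ⊤ M.subtype
      have htop : (⊤ : Subgroup ↥M).map M.subtype = M := by
        rw [← MonoidHom.range_eq_map]; exact M.range_subtype
      have : (c : F) ∈ N := by
        rw [hNcomm]
        have : (c : F) ∈ (commutator ↥M).map M.subtype := ⟨c, hc, rfl⟩
        rwa [hmap, htop] at this
      simpa [MonoidHom.mem_ker, QuotientGroup.eq_one_iff] using this
    let ψ : Abelianization (↥M) →* (F ⧸ N) :=
      QuotientGroup.lift (commutator ↥M) ((QuotientGroup.mk' N).comp M.subtype) hcomm
    have hψinj : Function.Injective ψ := by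
      rw [injective_iff_map_eq_one]
      intro a ha
      induction a using QuotientGroup.induction_on with
      | _ m =>
        have hm : (m : F) ∈ N := by
          have h1 : (QuotientGroup.mk' N) (m : F) = 1 := ha
          exact (QuotientGroup.eq_one_iff _).mp h1
        rw [hNcomm] at hm
        have hmap : (commutator ↥M).map M.subtype = ⁅M, M⁆ := by
          have := Subgroup.map_commutator (⊤ : Subgroup ↥M) ⊤ M.subtype
          rw [commutator, this, ← MonoidHom.range_eq_map, M.range_subtype]
        rw [← hmap] at hm
        obtain ⟨m', hm', hmm⟩ := hm
        have : m' = m := Subtype.ext hmm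
        subst this
        exact (QuotientGroup.eq_one_iff m').mpr hm'
    -- torsion-freeness of Abelianization ↥M
    have hMfree : IsFreeGroup ↥M := inferInstance
    have hker_tf : Monoid.IsTorsionFree (Abelianization ↥M) := tf_abelianization_of_free ↥M
    -- main argument
    intro x hx hfin
    have hπfin : IsOfFinOrder (π x) := π.isOfFinOrder hfin
    have hπx : π x = 1 := by
      by_contra h
      exact ih (π x) h hπfin
    -- x is in the image of ψ
    obtain ⟨y, rfl⟩ := QuotientGroup.mk_surjective x
    have hyM : y ∈ M := by
      have : QuotientGroup.mk (s := M) y = 1 := hπx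
      exact (QuotientGroup.eq_one_iff y).mp this
    have hxψ : QuotientGroup.mk (s := N) y = ψ (Abelianization.of ⟨y, hyM⟩) := rfl
    have hψfin : IsOfFinOrder (Abelianization.of (⟨y, hyM⟩ : ↥M)) := by
      have hψne : Abelianization.of (⟨y, hyM⟩ : ↥M) ≠ 1 := by
        intro h
        apply hx
        rw [hxψ, h, map_one]
      exact absurd hfin (by
        intro hf
        exact hker_tf _ hψne (by
          -- transfer finite order back through injective ψ
          obtain ⟨n, hn, hxn⟩ := hf.exists_pow_eq_one
          refine isOfFinOrder_iff_pow_eq_one.mpr ⟨n, hn, hψinj ?_⟩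
          rw [map_pow, map_one, ← hxψ, hxn]))
    exact hker_tf _ (by
      intro h
      apply hx
      rw [hxψ, h, map_one]) hψfin

/-- Free solvable groups are torsion-free: for `d ≥ 1`, `r ≥ 1`, the free solvable group
`S_{d,r} = F/F^{(d)}` (with `F` free of rank `r` and `F^{(d)}` the `d`-th derived
subgroup) has no nontrivial element of finite order. -/
theorem free_solvable_torsion_free (d r : ℕ) (hd : 1 ≤ d) (hr : 1 ≤ r)
    (x : FreeGroup (Fin r) ⧸ derivedSeries (FreeGroup (Fin r)) d) (hx : x ≠ 1) :
    ¬ IsOfFinOrder x := by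
  exact tf_quotient_derivedSeries (Fin r) d x hx
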